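/- Let 0 < p, q < 1 with p + q < 1/2, and suppose a_{m,t} ≤ 1 − m^{-q} for all m and all 1 ≤ t ≤ m. Define the sum statistic s_m(ζ) = Σ_{t=1}^m ζ_t and the critical value c'_m = m/2 − m^{1−(p+q)}/4. Then the sum test, which rejects the null hypothesis if and only if s_m ≤ c'_m, has its sum of type I and type II errors tend to 0: P0_m(s_m ≤ c'_m) → 0 and P1_m(s_m > c'_m) → 0 as m → ∞. (Proposition 3.3, part 1.) -/

import Mathlib

open MeasureTheory Filter

/-- The uniform distribution on `[0, a]` (for `a > 0`). -/
noncomputable def unif (a : ℝ) : Measure ℝ :=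
  (ENNReal.ofReal a)⁻¹ • volume.restrict (Set.Icc 0 a)

/-- The mixture `(1 - ε)·U[0,1] + ε·U[0,a]`. -/
noncomputable def mix (ε a : ℝ) : Measure ℝ :=
  ENNReal.ofReal (1 - ε) • unif 1 + ENNReal.ofReal ε • unif a

/-- The null law `P0_m`: `m` i.i.d. uniform-`[0,1]` coordinates. -/
noncomputable def nullLaw (m : ℕ) : Measure (Fin m → ℝ) :=
  Measure.pi fun _ => unif 1

/-- The alternative law `P1_m`: independent coordinates, the `t`-th distributed as
`(1 - ε)·U[0,1] + ε·U[0, a t]`. -/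
noncomputable def altLaw (m : ℕ) (ε : ℝ) (a : Fin m → ℝ) : Measure (Fin m → ℝ) :=
  Measure.pi fun t => mix ε (a t)


lemma unif_prob {a : ℝ} (ha : 0 < a) : IsProbabilityMeasure (unif a) := by
  constructor
  rw [unif, Measure.smul_apply, Measure.restrict_apply MeasurableSet.univ, Set.univ_inter,
    Real.volume_Icc, smul_eq_mul, sub_zero]
  exact ENNReal.inv_mul_cancel (by simp [ha]) ENNReal.ofReal_ne_top

lemma unif_ae_mem {a : ℝ} : ∀ᵐ x ∂unif a, x ∈ Set.Icc (0:ℝ) a := by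
  exact Measure.ae_smul_measure (ae_restrict_mem measurableSet_Icc) _

lemma integral_id_unif {a : ℝ} (ha : 0 < a) : ∫ x, x ∂unif a = a / 2 := by
  rw [unif, integral_smul_measure]
  have h1 : ∫ x in Set.Icc (0:ℝ) a, x = a ^ 2 / 2 := by
    rw [MeasureTheory.integral_Icc_eq_integral_Ioc, ← intervalIntegral.integral_of_le ha.le,
      integral_id]
    ring
  rw [h1, ENNReal.toReal_inv, ENNReal.toReal_ofReal ha.le, smul_eq_mul]
  field_simp

lemma integrable_id_unif {a : ℝ} (ha : 0 < a) : Integrable (fun x : ℝ => x) (unif a) := by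
  have := unif_prob ha
  rw [← memLp_one_iff_integrable]
  apply MemLp.of_bound aestronglyMeasurable_id (max a 1)
  filter_upwards [unif_ae_mem] with x hx
  rw [id_eq, Real.norm_eq_abs, abs_le]
  have h1 := le_max_right a 1
  have h2 := le_max_left a 1
  constructor <;> [linarith [hx.1]; linarith [hx.2]]

lemma mix_prob {ε a : ℝ} (hε0 : 0 ≤ ε) (hε1 : ε ≤ 1) (ha : 0 < a) :
    IsProbabilityMeasure (mix ε a) := by
  have h1 := unif_prob one_pos
  have h2 := unif_prob ha
  constructor
  rw [mix, Measure.add_apply, Measure.smul_apply, Measure.smul_apply, measure_univ, measure_univ,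
    smul_eq_mul, smul_eq_mul, mul_one, mul_one, ← ENNReal.ofReal_add (by linarith) hε0]
  norm_num

lemma mix_ae_mem {ε a : ℝ} (ha1 : a ≤ 1) : ∀ᵐ x ∂mix ε a, x ∈ Set.Icc (0:ℝ) 1 := by
  rw [mix, ae_add_measure_iff]
  constructor
  · exact Measure.ae_smul_measure unif_ae_mem _
  · apply Measure.ae_smul_measure _ _
    filter_upwards [unif_ae_mem] with x hx
    exact ⟨hx.1, le_trans hx.2 ha1⟩

lemma integral_id_mix {ε a : ℝ} (hε0 : 0 ≤ ε) (hε1 : ε ≤ 1) (ha : 0 < a) :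
    ∫ x, x ∂mix ε a = (1 - ε) / 2 + ε * a / 2 := by
  rw [mix, integral_add_measure
      ((integrable_id_unif one_pos).smul_measure ENNReal.ofReal_ne_top)
      ((integrable_id_unif ha).smul_measure ENNReal.ofReal_ne_top),
    integral_smul_measure, integral_smul_measure, integral_id_unif one_pos, integral_id_unif ha,
    ENNReal.toReal_ofReal (by linarith), ENNReal.toReal_ofReal hε0]
  simp only [smul_eq_mul]
  ring

lemma mapEvalPi {n : ℕ} (μ : Fin n → Measure ℝ) [∀ i, IsProbabilityMeasure (μ i)] (i : Fin n) :
    (Measure.pi μ).map (fun ζ => ζ i) = μ i := by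
  classical
  ext s hs
  rw [Measure.map_apply (measurable_pi_apply i) hs]
  have : (fun ζ : Fin n → ℝ => ζ i) ⁻¹' s
      = Set.pi Set.univ (Function.update (fun _ => Set.univ) i s) := Set.eval_preimage
  rw [this, Measure.pi_pi]
  rw [Finset.prod_eq_single_of_mem i (Finset.mem_univ i)
    (fun k _ hk => by simp [Function.update_of_ne hk])]
  simp

lemma indepFun_eval {n : ℕ} (μ : Fin n → Measure ℝ) [∀ i, IsProbabilityMeasure (μ i)]
    {i j : Fin n} (hij : i ≠ j) :
    ProbabilityTheory.IndepFun (fun ζ : Fin n → ℝ => ζ i) (fun ζ => ζ j) (Measure.pi μ) := by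
  classical
  rw [ProbabilityTheory.indepFun_iff_measure_inter_preimage_eq_mul]
  intro s t hs ht
  have h1 : (fun ζ : Fin n → ℝ => ζ i) ⁻¹' s
      = Set.pi Set.univ (Function.update (fun _ => Set.univ) i s) := Set.eval_preimage
  have h2 : (fun ζ : Fin n → ℝ => ζ j) ⁻¹' t
      = Set.pi Set.univ (Function.update (fun _ => Set.univ) j t) := Set.eval_preimage
  have hmi : Measure.pi μ ((fun ζ : Fin n → ℝ => ζ i) ⁻¹' s) = μ i s := by
    rw [← Measure.map_apply (measurable_pi_apply i) hs, mapEvalPi]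
  have hmj : Measure.pi μ ((fun ζ : Fin n → ℝ => ζ j) ⁻¹' t) = μ j t := by
    rw [← Measure.map_apply (measurable_pi_apply j) ht, mapEvalPi]
  rw [hmi, hmj, h1, h2, ← Set.pi_inter_distrib, Measure.pi_pi]
  have key : ∀ k : Fin n, μ k (Function.update (fun _ => Set.univ) i s k
        ∩ Function.update (fun _ => Set.univ) j t k)
      = (if k = i then μ i s else 1) * (if k = j then μ j t else 1) := by
    intro k
    rcases eq_or_ne k i with rfl | hki
    · simp [Function.update_of_ne hij, hij]
    · rcases eq_or_ne k j with rfl | hkj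
      · simp [Function.update_of_ne hki, hki]
      · simp [Function.update_of_ne hki, Function.update_of_ne hkj, hki, hkj]
  rw [Finset.prod_congr rfl (fun k _ => key k), Finset.prod_mul_distrib,
    Finset.prod_ite_eq' Finset.univ i (fun _ => μ i s),
    Finset.prod_ite_eq' Finset.univ j (fun _ => μ j t)]
  simp

lemma ae_mem_pi {n : ℕ} (μ : Fin n → Measure ℝ) [∀ i, IsProbabilityMeasure (μ i)]
    (hsupp : ∀ i, ∀ᵐ x ∂μ i, x ∈ Set.Icc (0:ℝ) 1) (i : Fin n) :
    ∀ᵐ ζ ∂Measure.pi μ, ζ i ∈ Set.Icc (0:ℝ) 1 := by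
  have h := hsupp i
  rw [← mapEvalPi μ i] at h
  exact (ae_map_iff (measurable_pi_apply i).aemeasurable measurableSet_Icc).mp h

lemma integral_eval_pi {n : ℕ} (μ : Fin n → Measure ℝ) [∀ i, IsProbabilityMeasure (μ i)]
    (i : Fin n) : ∫ ζ, ζ i ∂Measure.pi μ = ∫ x, x ∂μ i := by
  rw [← mapEvalPi μ i]
  exact (integral_map (μ := Measure.pi μ) (φ := fun ζ : Fin n → ℝ => ζ i) (f := fun x : ℝ => x)
    (measurable_pi_apply i).aemeasurable aestronglyMeasurable_id).symm

lemma chebyshev_pi {n : ℕ} (μ : Fin n → Measure ℝ) [∀ i, IsProbabilityMeasure (μ i)]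
    (hsupp : ∀ i, ∀ᵐ x ∂μ i, x ∈ Set.Icc (0:ℝ) 1) {r : ℝ} (hr : 0 < r) :
    Measure.pi μ {ζ | r ≤ |(∑ t, ζ t) - ∑ t, ∫ x, x ∂μ t|} ≤ ENNReal.ofReal (n / r ^ 2) := by
  set X : Fin n → (Fin n → ℝ) → ℝ := fun i ζ => ζ i with hX
  have hmem : ∀ i : Fin n, MemLp (X i) 2 (Measure.pi μ) := by
    intro i
    apply MemLp.of_bound (measurable_pi_apply i).aestronglyMeasurable 1
    filter_upwards [ae_mem_pi μ hsupp i] with ζ hζ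
    rw [Real.norm_eq_abs, abs_le]
    exact ⟨by linarith [hζ.1], hζ.2⟩
  have hS : MemLp (∑ i, X i) 2 (Measure.pi μ) :=
    memLp_finset_sum' _ (fun i _ => hmem i)
  have hint : ∀ i : Fin n, Integrable (X i) (Measure.pi μ) :=
    fun i => (hmem i).integrable one_le_two
  have hES : ∫ ζ, (∑ i, X i) ζ ∂Measure.pi μ = ∑ i, ∫ x, x ∂μ i := by
    simp only [Finset.sum_apply]
    rw [integral_finset_sum _ (fun i _ => hint i)]
    exact Finset.sum_congr rfl fun i _ => integral_eval_pi μ i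
  have hvar : ProbabilityTheory.variance (∑ i, X i) (Measure.pi μ) ≤ n := by
    rw [ProbabilityTheory.IndepFun.variance_sum (fun i _ => hmem i)
      (fun i _ j _ hij => indepFun_eval μ hij)]
    have hone : ∀ i : Fin n, ProbabilityTheory.variance (X i) (Measure.pi μ) ≤ 1 := by
      intro i
      rw [ProbabilityTheory.variance_eq_sub (hmem i)]
      have hsq : ∫ ζ, (X i ^ 2) ζ ∂Measure.pi μ ≤ 1 := by
        have : ∫ ζ, (X i ^ 2) ζ ∂Measure.pi μ ≤ ∫ _, (1:ℝ) ∂Measure.pi μ := by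
          apply integral_mono_ae (hmem i).integrable_sq (integrable_const 1)
          filter_upwards [ae_mem_pi μ hsupp i] with ζ hζ
          show ζ i ^ 2 ≤ 1
          nlinarith [hζ.1, hζ.2]
        simpa using this
      nlinarith [sq_nonneg (∫ ζ, X i ζ ∂Measure.pi μ), hsq]
    calc (∑ i, ProbabilityTheory.variance (X i) (Measure.pi μ)) ≤ ∑ _i : Fin n, (1:ℝ) :=
          Finset.sum_le_sum fun i _ => hone i
      _ = n := by simp
  have hkey := ProbabilityTheory.meas_ge_le_variance_div_sq (μ := Measure.pi μ) hS hr
  refine le_trans (measure_mono fun ζ hζ => ?_)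
    (hkey.trans (ENNReal.ofReal_le_ofReal ((div_le_div_iff_of_pos_right (by positivity)).mpr hvar)))
  show r ≤ |(∑ i, X i) ζ - ∫ x, (∑ i, X i) x ∂Measure.pi μ|
  rw [hES, Finset.sum_apply]
  exact hζ

lemma rpow_calc {x c : ℝ} (hx : 0 < x) : x / (x ^ c / 4) ^ 2 = 16 * x ^ (1 - 2 * c) := by
  have h1 : (x ^ c / 4) ^ 2 = x ^ (2 * c) / 16 := by
    rw [div_pow, ← Real.rpow_natCast (x ^ c) 2, ← Real.rpow_mul hx.le]
    norm_num [mul_comm]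
  rw [h1, div_div_eq_mul_div, Real.rpow_sub hx, Real.rpow_one]
  ring

theorem sum_test_consistent' (p q : ℝ) (hp0 : 0 < p) (hp1 : p < 1)
    (hq0 : 0 < q) (hq1 : q < 1) (hpq : p + q < 1 / 2)
    (a : (m : ℕ) → Fin m → ℝ)
    (ha0 : ∀ m, 2 ≤ m → ∀ t, 0 < a m t)
    (ha1 : ∀ m : ℕ, 2 ≤ m → ∀ t, a m t ≤ 1 - (m : ℝ) ^ (-q)) :
    Tendsto
      (fun m : ℕ => ((Measure.pi fun _ : Fin m => unif 1)
        {ζ | ∑ t, ζ t ≤ (m : ℝ) / 2 - (m : ℝ) ^ (1 - (p + q)) / 4}).toReal)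
      atTop (nhds 0)
    ∧ Tendsto
      (fun m : ℕ => ((Measure.pi fun t => mix ((m : ℝ) ^ (-p)) (a m t))
        {ζ | (m : ℝ) / 2 - (m : ℝ) ^ (1 - (p + q)) / 4 < ∑ t, ζ t}).toReal)
      atTop (nhds 0) := by
  have hlim : Tendsto (fun m : ℕ => 16 * (m:ℝ) ^ (2*(p+q)-1)) atTop (nhds 0) := by
    have h := (tendsto_rpow_neg_atTop (by linarith : (0:ℝ) < 1 - 2*(p+q))).comp
      (tendsto_natCast_atTop_atTop (R := ℝ))
    have he : (fun m : ℕ => 16 * (m:ℝ) ^ (2*(p+q)-1))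
        = fun m : ℕ => 16 * (m:ℝ) ^ (-(1 - 2*(p+q))) := by
      funext m; congr 1; ring_nf
    rw [he]
    simpa using h.const_mul (16:ℝ)
  constructor
  · apply squeeze_zero' (Eventually.of_forall fun m => ENNReal.toReal_nonneg) ?_ hlim
    filter_upwards [eventually_ge_atTop 1] with m hm
    have hm0 : (0:ℝ) < m := by exact_mod_cast hm
    have hd : (0:ℝ) < (m:ℝ) ^ (1-(p+q)) / 4 := by
      have := Real.rpow_pos_of_pos hm0 (1-(p+q)); linarith
    have hmean : ∑ _t : Fin m, ∫ x, x ∂unif 1 = (m:ℝ) / 2 := by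
      simp [integral_id_unif one_pos, Finset.card_univ]
      ring
    have hsub : {ζ : Fin m → ℝ | ∑ t, ζ t ≤ (m:ℝ)/2 - (m:ℝ)^(1-(p+q))/4}
        ⊆ {ζ : Fin m → ℝ | (m:ℝ)^(1-(p+q))/4
            ≤ |(∑ t, ζ t) - ∑ _t : Fin m, ∫ x, x ∂unif 1|} := by
      intro ζ hζ
      simp only [Set.mem_setOf_eq] at *
      rw [hmean, abs_sub_comm]
      refine le_trans ?_ (le_abs_self _)
      linarith
    have hcheb := @chebyshev_pi m (fun _ => unif 1) (fun _ => unif_prob one_pos)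
      (fun _ => unif_ae_mem) _ hd
    have hle := le_trans (measure_mono hsub) hcheb
    have h2 := ENNReal.toReal_le_of_le_ofReal (by positivity) hle
    calc ((Measure.pi fun _ : Fin m => unif 1) _).toReal
        ≤ (m:ℝ) / ((m:ℝ)^(1-(p+q))/4) ^ 2 := h2
      _ = 16 * (m:ℝ) ^ (1 - 2 * (1-(p+q))) := rpow_calc hm0
      _ = 16 * (m:ℝ) ^ (2*(p+q)-1) := by
          rw [show (1 - 2*(1-(p+q))) = 2*(p+q)-1 by ring]
  · apply squeeze_zero' (Eventually.of_forall fun m => ENNReal.toReal_nonneg) ?_ hlim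
    filter_upwards [eventually_ge_atTop 2] with m hm
    have hm0 : (0:ℝ) < m := by exact_mod_cast Nat.lt_of_lt_of_le two_pos hm
    have hm1 : (1:ℝ) ≤ m := by exact_mod_cast Nat.one_le_of_lt hm
    have hε0 : (0:ℝ) ≤ (m:ℝ) ^ (-p) := Real.rpow_nonneg hm0.le _
    have hε1 : (m:ℝ) ^ (-p) ≤ 1 :=
      Real.rpow_le_one_of_one_le_of_nonpos hm1 (by linarith)
    have hq0' : (0:ℝ) ≤ (m:ℝ) ^ (-q) := Real.rpow_nonneg hm0.le _
    have hprob : ∀ t : Fin m, IsProbabilityMeasure (mix ((m:ℝ)^(-p)) (a m t)) :=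
      fun t => mix_prob hε0 hε1 (ha0 m hm t)
    have hsupp : ∀ t : Fin m, ∀ᵐ x ∂mix ((m:ℝ)^(-p)) (a m t), x ∈ Set.Icc (0:ℝ) 1 :=
      fun t => mix_ae_mem (le_trans (ha1 m hm t) (by linarith))
    have hd : (0:ℝ) < (m:ℝ) ^ (1-(p+q)) / 4 := by
      have := Real.rpow_pos_of_pos hm0 (1-(p+q)); linarith
    have hprod : (m:ℝ) * ((m:ℝ)^(-p) * (m:ℝ)^(-q)) = (m:ℝ)^(1-(p+q)) := by
      rw [show (1:ℝ) - (p+q) = 1 + (-p + -q) by ring, Real.rpow_add hm0,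
        Real.rpow_add hm0, Real.rpow_one]
    have hterm : ∀ t : Fin m, ∫ x, x ∂mix ((m:ℝ)^(-p)) (a m t)
        ≤ 1/2 - (m:ℝ)^(-p) * (m:ℝ)^(-q) / 2 := by
      intro t
      rw [integral_id_mix hε0 hε1 (ha0 m hm t)]
      have h := mul_le_mul_of_nonneg_left (ha1 m hm t) hε0
      linarith [h]
    have hmean : ∑ t : Fin m, ∫ x, x ∂mix ((m:ℝ)^(-p)) (a m t)
        ≤ (m:ℝ)/2 - (m:ℝ)^(1-(p+q))/2 := by
      calc ∑ t : Fin m, ∫ x, x ∂mix ((m:ℝ)^(-p)) (a m t)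
          ≤ ∑ _t : Fin m, (1/2 - (m:ℝ)^(-p) * (m:ℝ)^(-q) / 2) :=
            Finset.sum_le_sum fun t _ => hterm t
        _ = (m:ℝ) * (1/2 - (m:ℝ)^(-p) * (m:ℝ)^(-q) / 2) := by
            simp [Finset.card_univ]
            ring
        _ = (m:ℝ)/2 - (m:ℝ) * ((m:ℝ)^(-p) * (m:ℝ)^(-q)) / 2 := by ring
        _ = (m:ℝ)/2 - (m:ℝ)^(1-(p+q))/2 := by rw [hprod]
    have hsub : {ζ : Fin m → ℝ | (m:ℝ)/2 - (m:ℝ)^(1-(p+q))/4 < ∑ t, ζ t}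
        ⊆ {ζ : Fin m → ℝ | (m:ℝ)^(1-(p+q))/4
            ≤ |(∑ t, ζ t) - ∑ t : Fin m, ∫ x, x ∂mix ((m:ℝ)^(-p)) (a m t)|} := by
      intro ζ hζ
      simp only [Set.mem_setOf_eq] at *
      refine le_trans ?_ (le_abs_self _)
      linarith
    have hcheb := @chebyshev_pi m (fun t => mix ((m:ℝ)^(-p)) (a m t)) hprob hsupp _ hd
    have hle := le_trans (measure_mono hsub) hcheb
    have h2 := ENNReal.toReal_le_of_le_ofReal (by positivity) hle
    calc ((Measure.pi fun t : Fin m => mix ((m:ℝ)^(-p)) (a m t)) _).toReal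
        ≤ (m:ℝ) / ((m:ℝ)^(1-(p+q))/4) ^ 2 := h2
      _ = 16 * (m:ℝ) ^ (1 - 2 * (1-(p+q))) := rpow_calc hm0
      _ = 16 * (m:ℝ) ^ (2*(p+q)-1) := by
          rw [show (1 - 2*(1-(p+q))) = 2*(p+q)-1 by ring]

/-- **Proposition 3.3, part 1 (consistency of the sum test).** Let `0 < p, q < 1` with
`p + q < 1/2`, `ε_m = m^{-p}`, and `a m t ∈ (0,1]` with `a m t ≤ 1 - m^{-q}` for all
`m ≥ 2`, `1 ≤ t ≤ m`.  With `s_m(ζ) = ∑_t ζ_t` and critical value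
`c'_m = m/2 - m^{1-(p+q)}/4`, the sum test rejecting iff `s_m ≤ c'_m` has its sum of type I
and type II errors tend to `0`: `P0_m(s_m ≤ c'_m) → 0` and `P1_m(s_m > c'_m) → 0`. -/
theorem sum_test_consistent (p q : ℝ) (hp0 : 0 < p) (hp1 : p < 1)
    (hq0 : 0 < q) (hq1 : q < 1) (hpq : p + q < 1 / 2)
    (a : (m : ℕ) → Fin m → ℝ)
    (ha0 : ∀ m, 2 ≤ m → ∀ t, 0 < a m t)
    (ha1 : ∀ m : ℕ, 2 ≤ m → ∀ t, a m t ≤ 1 - (m : ℝ) ^ (-q)) :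
    Tendsto
      (fun m : ℕ => (nullLaw m
        {ζ | ∑ t, ζ t ≤ (m : ℝ) / 2 - (m : ℝ) ^ (1 - (p + q)) / 4}).toReal)
      atTop (nhds 0)
    ∧ Tendsto
      (fun m : ℕ => (altLaw m ((m : ℝ) ^ (-p)) (a m)
        {ζ | (m : ℝ) / 2 - (m : ℝ) ^ (1 - (p + q)) / 4 < ∑ t, ζ t}).toReal)
      atTop (nhds 0) := by
  have h := sum_test_consistent' p q hp0 hp1 hq0 hq1 hpq a ha0 ha1
  unfold nullLaw altLaw
  exact h
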